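/- Let 𝒳 and 𝒜 be finite sets of vectors in ℝᵈ, X ⊊ 𝒳 and A ⊊ 𝒜 nonempty proper subsets, X^c = 𝒳 \ X, A^c = 𝒜 \ A. With g(X,A) = (X̄ − 𝒳̄)·(Ā − 𝒜̄) and two-group g(X₁,A₁,X₂,A₂) = (X̄₁ − μ)·(Ā₁ − 𝒜̄) + (X̄₂ − μ)·(Ā₂ − 𝒜̄) where μ = (X̄₁ + X̄₂)/2, one has g(X,A) = 2·(|X^c|/|𝒳|)·(|A^c|/|𝒜|)·g(X,A,X^c,A^c). -/

import Mathlib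

open Finset

noncomputable def wmean {d : ℕ} (S : Finset (EuclideanSpace ℝ (Fin d))) :
    EuclideanSpace ℝ (Fin d) :=
  (S.card : ℝ)⁻¹ • ∑ v ∈ S, v

noncomputable def dot {d : ℕ} (x y : EuclideanSpace ℝ (Fin d)) : ℝ := inner ℝ x y

lemma wmean_split {d : ℕ} [DecidableEq (EuclideanSpace ℝ (Fin d))]
    (𝒳 X : Finset (EuclideanSpace ℝ (Fin d))) (hX : X.Nonempty) (hXsub : X ⊂ 𝒳) :
    wmean X - wmean 𝒳 =
      (((𝒳 \ X).card : ℝ) / (𝒳.card : ℝ)) • (wmean X - wmean (𝒳 \ X)) := by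
  have hne : (𝒳 \ X).Nonempty := by
    obtain ⟨x, hx𝒳, hxX⟩ := Finset.exists_of_ssubset hXsub
    exact ⟨x, Finset.mem_sdiff.2 ⟨hx𝒳, hxX⟩⟩
  have hn' : (0:ℝ) < X.card := by exact_mod_cast hX.card_pos
  have hm' : (0:ℝ) < (𝒳 \ X).card := by exact_mod_cast hne.card_pos
  have hn : ((X.card : ℝ)) ≠ 0 := ne_of_gt hn'
  have hm : (((𝒳 \ X).card : ℝ)) ≠ 0 := ne_of_gt hm'
  have hsum : ∑ v ∈ 𝒳 \ X, v + ∑ v ∈ X, v = ∑ v ∈ 𝒳, v :=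
    Finset.sum_sdiff hXsub.subset
  have hcard : ((𝒳 \ X).card : ℝ) + (X.card : ℝ) = (𝒳.card : ℝ) := by
    exact_mod_cast Finset.card_sdiff_add_card_eq_card hXsub.subset
  simp only [wmean]
  rw [← hsum, ← hcard]
  have hN : ((𝒳 \ X).card : ℝ) + (X.card : ℝ) ≠ 0 := by positivity
  match_scalars <;> field_simp [hn, hm, hN] <;> ring

theorem stmt_4 {d : ℕ} [DecidableEq (EuclideanSpace ℝ (Fin d))] (𝒳 𝒜 : Finset (EuclideanSpace ℝ (Fin d)))
    (X A : Finset (EuclideanSpace ℝ (Fin d)))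
    (hX : X.Nonempty) (hXsub : X ⊂ 𝒳) (hA : A.Nonempty) (hAsub : A ⊂ 𝒜) :
    dot (wmean X - wmean 𝒳) (wmean A - wmean 𝒜) =
      2 * (((𝒳 \ X).card : ℝ) / (𝒳.card : ℝ)) * (((𝒜 \ A).card : ℝ) / (𝒜.card : ℝ)) *
        (dot (wmean X - (1 / 2 : ℝ) • (wmean X + wmean (𝒳 \ X))) (wmean A - wmean 𝒜) +
          dot (wmean (𝒳 \ X) - (1 / 2 : ℝ) • (wmean X + wmean (𝒳 \ X)))
            (wmean (𝒜 \ A) - wmean 𝒜)) := by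
  set u := wmean X - wmean (𝒳 \ X) with hu
  set v := wmean A - wmean (𝒜 \ A) with hv
  set cX := (((𝒳 \ X).card : ℝ) / (𝒳.card : ℝ)) with hcX
  set cA := (((𝒜 \ A).card : ℝ) / (𝒜.card : ℝ)) with hcA
  have eX : wmean X - wmean 𝒳 = cX • u := wmean_split 𝒳 X hX hXsub
  have eA : wmean A - wmean 𝒜 = cA • v := wmean_split 𝒜 A hA hAsub
  have h1 : wmean X - (1 / 2 : ℝ) • (wmean X + wmean (𝒳 \ X)) = (1/2 : ℝ) • u := by
    rw [hu]; module
  have h2 : wmean (𝒳 \ X) - (1 / 2 : ℝ) • (wmean X + wmean (𝒳 \ X)) = (-(1/2) : ℝ) • u := by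
    rw [hu]; module
  have h3 : (inner ℝ u (wmean (𝒜 \ A) - wmean 𝒜) : ℝ) =
      inner ℝ u (wmean A - wmean 𝒜) - inner ℝ u v := by
    rw [← inner_sub_right]
    congr 1
    rw [hv]; module
  simp only [dot, eX, eA, h1, h2, h3, real_inner_smul_left, real_inner_smul_right]
  ring
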